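/- Let s, σ, l > 0 with sl > 4 and 1 + σ - sl/2 > 0, and α_i = s/(i+σ). Then A_k := ∏_{i=1}^k (1 - α_i l/2) satisfies A_k = (Γ(1+σ)/Γ(1+σ-sl/2)) (k+1+σ)^{-sl/2} + O((k+1+σ)^{-1-sl/2}) as k → ∞; in particular A_k = O(k^{-sl/2}). -/

import Mathlib

set_option maxHeartbeats 1000000

open Finset Filter Asymptotics Real Topology

noncomputable def auxA (σ c : ℝ) (k : ℕ) : ℝ := ∏ i ∈ Finset.Icc 1 k, (1 - c / ((i : ℝ) + σ))

noncomputable def auxF (σ c : ℝ) (j : ℕ) : ℝ :=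
  Real.log (1 - c / ((j : ℝ) + 1 + σ)) +
    c * (Real.log ((j : ℝ) + 2 + σ) - Real.log ((j : ℝ) + 1 + σ))

lemma auxCeq (σ c C : ℝ) (hσ1 : 1 < σ) (hc2 : 2 < c) (hcσ : c < 1 + σ)
    (hApos : ∀ k, 0 < auxA σ c k)
    (hBtend' : Tendsto (fun k : ℕ => auxA σ c k * ((k:ℝ)+1+σ)^c) atTop (𝓝 C)) :
    C = Real.Gamma (1+σ) / Real.Gamma (1+σ-c) := by
  have hc0 : 0 < c := by linarith
  have hσc : (0:ℝ) < 1 + σ - c := by linarith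
  -- pointwise identity
  have hpoint : ∀ n : ℕ, 1 ≤ n →
      Real.GammaSeq (1+σ) n / Real.GammaSeq (1+σ-c) n = (n:ℝ)^c * auxA σ c (n+1) := by
    intro n hn
    have hn0 : (0:ℝ) < (n:ℝ) := by exact_mod_cast hn
    have hPb : (0:ℝ) < ∏ j ∈ Finset.range (n+1), (1 + σ + (j:ℝ)) :=
      Finset.prod_pos fun j _ => by positivity
    have hPaEq : (∏ j ∈ Finset.range (n+1), (1 + σ - c + (j:ℝ)))
        = auxA σ c (n+1) * ∏ j ∈ Finset.range (n+1), (1 + σ + (j:ℝ)) := by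
      rw [auxA]
      have hIcc : Finset.Icc 1 (n+1) = Finset.Ico 1 (n+2) := by
        rw [← Finset.Ico_add_one_right_eq_Icc]; rfl
      rw [hIcc, Finset.prod_Ico_eq_prod_range]
      have hidx : n + 2 - 1 = n + 1 := rfl
      rw [hidx, ← Finset.prod_mul_distrib]
      refine Finset.prod_congr rfl fun j _ => ?_
      have hj : (0:ℝ) < 1 + σ + (j:ℝ) := by positivity
      push_cast
      field_simp
      ring
    have hfact : (Nat.factorial n : ℝ) ≠ 0 := Nat.cast_ne_zero.2 (Nat.factorial_ne_zero n)
    have hna : (0:ℝ) < (n:ℝ) ^ (1+σ-c) := Real.rpow_pos_of_pos hn0 _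
    have hN : (n:ℝ) ^ (1+σ) = (n:ℝ)^c * (n:ℝ)^(1+σ-c) := by
      rw [← Real.rpow_add hn0]
      ring_nf
    have hA1 := hApos (n+1)
    simp only [Real.GammaSeq]
    rw [hPaEq, hN]
    field_simp
  have hG : Tendsto (fun n : ℕ => Real.GammaSeq (1+σ) n / Real.GammaSeq (1+σ-c) n) atTop
      (𝓝 (Real.Gamma (1+σ) / Real.Gamma (1+σ-c))) :=
    (Real.GammaSeq_tendsto_Gamma _).div (Real.GammaSeq_tendsto_Gamma _)
      (Real.Gamma_pos_of_pos hσc).ne'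
  have hfin : Tendsto (fun n : ℕ => (n:ℝ)^c * auxA σ c (n+1)) atTop
      (𝓝 (Real.Gamma (1+σ) / Real.Gamma (1+σ-c))) := by
    refine hG.congr' ?_
    filter_upwards [eventually_ge_atTop 1] with n hn
    exact hpoint n hn
  -- the other limit
  have hr : Tendsto (fun n : ℕ => ((n:ℝ)/((n:ℝ)+2+σ)) ^ c) atTop (𝓝 1) := by
    have hd : Tendsto (fun n : ℕ => (n:ℝ)+2+σ) atTop atTop := by
      apply tendsto_atTop_add_const_right
      apply tendsto_atTop_add_const_right
      exact tendsto_natCast_atTop_atTop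
    have h1 : Tendsto (fun n : ℕ => 1 - (2+σ)/((n:ℝ)+2+σ)) atTop (𝓝 (1 - 0)) :=
      tendsto_const_nhds.sub (Tendsto.div_atTop tendsto_const_nhds hd)
    rw [sub_zero] at h1
    have h0 : Tendsto (fun n : ℕ => (n:ℝ)/((n:ℝ)+2+σ)) atTop (𝓝 1) := by
      refine h1.congr fun n => ?_
      have hne : ((n:ℝ)+2+σ) ≠ 0 := by positivity
      field_simp
      ring
    have := h0.rpow_const (p := c) (Or.inl one_ne_zero)
    simpa using this
  have hfin2 : Tendsto (fun n : ℕ => (n:ℝ)^c * auxA σ c (n+1)) atTop (𝓝 C) := by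
    have hB1 : Tendsto (fun n : ℕ => auxA σ c (n+1) * (((n+1:ℕ):ℝ)+1+σ)^c) atTop (𝓝 C) :=
      hBtend'.comp (tendsto_add_atTop_nat 1)
    have hmul := hB1.mul hr
    rw [mul_one] at hmul
    refine hmul.congr fun n => ?_
    have h2σ : (0:ℝ) < (n:ℝ)+2+σ := by positivity
    have hcast : ((n+1:ℕ):ℝ)+1+σ = (n:ℝ)+2+σ := by push_cast; ring
    rw [hcast]
    rw [mul_assoc, ← Real.mul_rpow h2σ.le (by positivity)]
    have : ((n:ℝ)+2+σ) * ((n:ℝ)/((n:ℝ)+2+σ)) = (n:ℝ) := by field_simp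
    rw [this]
    ring
  exact tendsto_nhds_unique hfin2 hfin

lemma auxBigO (σ c K : ℝ) (hσ1 : 1 < σ) (hc2 : 2 < c) (hcσ : c < 1 + σ) (hK0 : 0 < K)
    (hApos : ∀ k, 0 < auxA σ c k)
    (hkey : ∀ k : ℕ, Real.log (auxA σ c k) + c * Real.log ((k : ℝ) + 1 + σ)
      = c * Real.log (1 + σ) + ∑ j ∈ Finset.range k, auxF σ c j)
    (hsummable : Summable (auxF σ c))
    (htail : ∀ k : ℕ, |∑ j ∈ Finset.range k, auxF σ c j - ∑' j, auxF σ c j| ≤ K * (1/((k:ℝ)+1)))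
    (hCeqOf : ∀ C : ℝ, Tendsto (fun k : ℕ => auxA σ c k * ((k:ℝ)+1+σ)^c) atTop (𝓝 C) →
        C = Real.Gamma (1+σ) / Real.Gamma (1+σ-c)) :
    ((fun k : ℕ => auxA σ c k
          - (Real.Gamma (1 + σ) / Real.Gamma (1 + σ - c)) * ((k : ℝ) + 1 + σ) ^ (-c))
        =O[atTop] fun k : ℕ => ((k : ℝ) + 1 + σ) ^ (-1 - c)) ∧
      ((fun k : ℕ => auxA σ c k) =O[atTop] fun k : ℕ => (k : ℝ) ^ (-c)) := by
  have hc0 : 0 < c := by linarith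
  have hσc : (0:ℝ) < 1 + σ - c := by linarith
  set S : ℝ := ∑' j, auxF σ c j with hS
  set C : ℝ := Real.exp (c * Real.log (1+σ) + S) with hC
  have hC0 : 0 < C := Real.exp_pos _
  have hsum_tendsto : Tendsto (fun n => ∑ j ∈ Finset.range n, auxF σ c j) atTop (𝓝 S) :=
    hsummable.hasSum.tendsto_sum_nat
  -- pointwise exponential identity
  have hpt : ∀ k : ℕ, auxA σ c k * ((k:ℝ)+1+σ)^c
      = Real.exp (c * Real.log (1+σ) + ∑ j ∈ Finset.range k, auxF σ c j) := by
    intro k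
    have hy : (0:ℝ) < (k:ℝ)+1+σ := by positivity
    rw [← hkey k, Real.exp_add, Real.exp_log (hApos k)]
    congr 1
    rw [Real.rpow_def_of_pos hy, mul_comm]
  have hBtend' : Tendsto (fun k : ℕ => auxA σ c k * ((k:ℝ)+1+σ)^c) atTop (𝓝 C) := by
    have h1 : Tendsto (fun k : ℕ => c * Real.log (1+σ) + ∑ j ∈ Finset.range k, auxF σ c j)
        atTop (𝓝 (c * Real.log (1+σ) + S)) := tendsto_const_nhds.add hsum_tendsto
    have h2 := (Real.continuous_exp.tendsto _).comp h1
    refine h2.congr fun k => ?_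
    simp only [Function.comp_apply]
    exact (hpt k).symm
  have hCeq : C = Real.Gamma (1+σ) / Real.Gamma (1+σ-c) := hCeqOf C hBtend'
  -- quantitative bound on B k - C
  have hBbound : ∀ᶠ k : ℕ in atTop,
      |auxA σ c k * ((k:ℝ)+1+σ)^c - C| ≤ (2*C*K) * (1/((k:ℝ)+1)) := by
    filter_upwards [eventually_ge_atTop ⌈K⌉₊] with k hk
    have hk0 : (0:ℝ) ≤ (k:ℝ) := Nat.cast_nonneg k
    have hK1 : K * (1/((k:ℝ)+1)) ≤ 1 := by
      rw [mul_one_div, div_le_one (by positivity)]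
      calc K ≤ (⌈K⌉₊ : ℝ) := Nat.le_ceil K
        _ ≤ (k:ℝ) := by exact_mod_cast hk
        _ ≤ (k:ℝ)+1 := by linarith
    have hδb : |∑ j ∈ Finset.range k, auxF σ c j - S| ≤ K * (1/((k:ℝ)+1)) := htail k
    have hBk : auxA σ c k * ((k:ℝ)+1+σ)^c - C
        = C * (Real.exp (∑ j ∈ Finset.range k, auxF σ c j - S) - 1) := by
      have he : c * Real.log (1+σ) + ∑ j ∈ Finset.range k, auxF σ c j
          = (c * Real.log (1+σ) + S) + (∑ j ∈ Finset.range k, auxF σ c j - S) := by ring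
      rw [hpt k, hC, he, Real.exp_add]
      ring
    rw [hBk, abs_mul, abs_of_pos hC0]
    have habs1 : |∑ j ∈ Finset.range k, auxF σ c j - S| ≤ 1 := hδb.trans hK1
    have h2 := Real.abs_exp_sub_one_le habs1
    calc C * |Real.exp (∑ j ∈ Finset.range k, auxF σ c j - S) - 1|
        ≤ C * (2 * |∑ j ∈ Finset.range k, auxF σ c j - S|) :=
          mul_le_mul_of_nonneg_left h2 hC0.le
      _ ≤ C * (2 * (K * (1/((k:ℝ)+1)))) := by
          have := mul_le_mul_of_nonneg_left hδb (by norm_num : (0:ℝ) ≤ 2)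
          exact mul_le_mul_of_nonneg_left this hC0.le
      _ = (2*C*K) * (1/((k:ℝ)+1)) := by ring
  -- first big-O
  have key1 : (fun k : ℕ => auxA σ c k
        - (Real.Gamma (1 + σ) / Real.Gamma (1 + σ - c)) * ((k : ℝ) + 1 + σ) ^ (-c))
      =O[atTop] fun k : ℕ => ((k : ℝ) + 1 + σ) ^ (-1 - c) := by
    rw [← hCeq]
    refine isBigO_iff.2 ⟨2*C*K*(1+σ), ?_⟩
    filter_upwards [hBbound] with k hk
    have hy0 : (0:ℝ) < (k:ℝ)+1+σ := by positivity
    have hk0 : (0:ℝ) ≤ (k:ℝ) := Nat.cast_nonneg k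
    have hyc : (0:ℝ) < ((k:ℝ)+1+σ)^c := Real.rpow_pos_of_pos hy0 c
    have hync : (0:ℝ) < ((k:ℝ)+1+σ)^(-c) := Real.rpow_pos_of_pos hy0 _
    have hsplit : auxA σ c k - C * ((k:ℝ)+1+σ)^(-c)
        = (auxA σ c k * ((k:ℝ)+1+σ)^c - C) * ((k:ℝ)+1+σ)^(-c) := by
      rw [Real.rpow_neg hy0.le]
      field_simp
    have hexp : ((k:ℝ)+1+σ)^(-1-c) = (((k:ℝ)+1+σ))⁻¹ * ((k:ℝ)+1+σ)^(-c) := by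
      rw [show (-1-c : ℝ) = (-1) + (-c) by ring, Real.rpow_add hy0, Real.rpow_neg_one]
    rw [Real.norm_eq_abs, Real.norm_eq_abs, hsplit, abs_mul, abs_of_pos hync, hexp,
      abs_of_pos (by positivity : (0:ℝ) < ((k:ℝ)+1+σ)⁻¹ * ((k:ℝ)+1+σ)^(-c))]
    have hstep1 : |auxA σ c k * ((k:ℝ)+1+σ)^c - C| * ((k:ℝ)+1+σ)^(-c)
        ≤ ((2*C*K) * (1/((k:ℝ)+1))) * ((k:ℝ)+1+σ)^(-c) :=
      mul_le_mul_of_nonneg_right hk hync.le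
    have hstep2 : (2*C*K) * (1/((k:ℝ)+1)) ≤ (2*C*K*(1+σ)) * ((k:ℝ)+1+σ)⁻¹ := by
      rw [mul_one_div, ← div_eq_mul_inv, div_le_div_iff₀ (by positivity) hy0]
      have h2CK : (0:ℝ) ≤ 2*C*K := by positivity
      nlinarith [mul_nonneg (mul_nonneg h2CK (by linarith : (0:ℝ) ≤ σ)) hk0]
    calc |auxA σ c k * ((k:ℝ)+1+σ)^c - C| * ((k:ℝ)+1+σ)^(-c)
        ≤ ((2*C*K) * (1/((k:ℝ)+1))) * ((k:ℝ)+1+σ)^(-c) := hstep1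
      _ ≤ ((2*C*K*(1+σ)) * ((k:ℝ)+1+σ)⁻¹) * ((k:ℝ)+1+σ)^(-c) :=
          mul_le_mul_of_nonneg_right hstep2 hync.le
      _ = 2*C*K*(1+σ) * (((k:ℝ)+1+σ)⁻¹ * ((k:ℝ)+1+σ)^(-c)) := by ring
  -- second big-O
  have e1 : (fun k : ℕ => ((k:ℝ)+1+σ)^(-1-c)) =O[atTop] (fun k : ℕ => (k:ℝ)^(-c)) := by
    refine isBigO_iff.2 ⟨1, ?_⟩
    filter_upwards [eventually_ge_atTop 1] with k hk
    have hk1 : (1:ℝ) ≤ (k:ℝ) := by exact_mod_cast hk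
    have hk0 : (0:ℝ) < (k:ℝ) := by linarith
    have hy0 : (0:ℝ) < (k:ℝ)+1+σ := by linarith
    have h1 : ((k:ℝ)+1+σ)^(-1-c) ≤ (k:ℝ)^(-1-c) :=
      Real.rpow_le_rpow_of_nonpos hk0 (by linarith) (by linarith)
    have h2 : (k:ℝ)^(-1-c) ≤ (k:ℝ)^(-c) :=
      Real.rpow_le_rpow_of_exponent_le hk1 (by linarith)
    rw [Real.norm_eq_abs, Real.norm_eq_abs, abs_of_pos (Real.rpow_pos_of_pos hy0 _),
      abs_of_pos (Real.rpow_pos_of_pos hk0 _), one_mul]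
    linarith
  have e2 : (fun k : ℕ => (Real.Gamma (1+σ)/Real.Gamma (1+σ-c)) * ((k:ℝ)+1+σ)^(-c))
      =O[atTop] fun k : ℕ => (k:ℝ)^(-c) := by
    refine isBigO_iff.2 ⟨|Real.Gamma (1+σ)/Real.Gamma (1+σ-c)|, ?_⟩
    filter_upwards [eventually_ge_atTop 1] with k hk
    have hk1 : (1:ℝ) ≤ (k:ℝ) := by exact_mod_cast hk
    have hk0 : (0:ℝ) < (k:ℝ) := by linarith
    have hy0 : (0:ℝ) < (k:ℝ)+1+σ := by linarith
    have h1 : ((k:ℝ)+1+σ)^(-c) ≤ (k:ℝ)^(-c) :=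
      Real.rpow_le_rpow_of_nonpos hk0 (by linarith) (by linarith)
    rw [Real.norm_eq_abs, Real.norm_eq_abs, abs_mul,
      abs_of_pos (Real.rpow_pos_of_pos hy0 _), abs_of_pos (Real.rpow_pos_of_pos hk0 _)]
    exact mul_le_mul_of_nonneg_left h1 (abs_nonneg _)
  have key2 : (fun k : ℕ => auxA σ c k) =O[atTop] fun k : ℕ => (k:ℝ)^(-c) := by
    have h := (key1.trans e1).add e2
    refine h.congr_left fun k => ?_
    ring
  exact ⟨key1, key2⟩

lemma aux_main (σ c : ℝ) (hσ1 : 1 < σ) (hc2 : 2 < c) (hcσ : c < 1 + σ) :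
    ((fun k : ℕ => auxA σ c k
          - (Real.Gamma (1 + σ) / Real.Gamma (1 + σ - c)) * ((k : ℝ) + 1 + σ) ^ (-c))
        =O[atTop] fun k : ℕ => ((k : ℝ) + 1 + σ) ^ (-1 - c)) ∧
      ((fun k : ℕ => auxA σ c k) =O[atTop] fun k : ℕ => (k : ℝ) ^ (-c)) := by
  have hc0 : 0 < c := by linarith
  have h1σ : (0:ℝ) < 1 + σ := by linarith
  have hσ0 : 0 < σ := by linarith
  have hxfac : ∀ x : ℝ, 1 + σ ≤ x → 0 < 1 - c / x := by
    intro x hx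
    have hx0 : (0:ℝ) < x := by linarith
    have : c / x < 1 := (div_lt_one hx0).2 (lt_of_lt_of_le hcσ hx)
    linarith
  have hApos : ∀ k, 0 < auxA σ c k := by
    intro k
    refine Finset.prod_pos fun i hi => ?_
    have hi1 : 1 ≤ i := (Finset.mem_Icc.1 hi).1
    have h1 : (1:ℝ) ≤ (i:ℝ) := by exact_mod_cast hi1
    exact hxfac _ (by linarith)
  have hkey : ∀ k : ℕ, Real.log (auxA σ c k) + c * Real.log ((k : ℝ) + 1 + σ)
      = c * Real.log (1 + σ) + ∑ j ∈ Finset.range k, auxF σ c j := by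
    intro k
    induction k with
    | zero =>
      have hA0 : auxA σ c 0 = 1 := by
        rw [auxA, Finset.Icc_eq_empty (by omega), Finset.prod_empty]
      simp [hA0]
    | succ k ih =>
      have hk1 : (1:ℝ) + σ ≤ (k:ℝ) + 1 + σ := by
        have : (0:ℝ) ≤ (k:ℝ) := Nat.cast_nonneg k
        linarith
      have hfk : 0 < 1 - c / ((k:ℝ) + 1 + σ) := hxfac _ hk1
      have hstep : auxA σ c (k+1) = auxA σ c k * (1 - c / ((k:ℝ) + 1 + σ)) := by
        rw [auxA, auxA, Finset.prod_Icc_succ_top (Nat.le_add_left 1 k)]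
        push_cast
        ring
      rw [hstep, Real.log_mul (hApos k).ne' hfk.ne', Finset.sum_range_succ]
      have e1 : ((k:ℕ)+1 : ℕ) = (k+1 : ℕ) := rfl
      push_cast
      have e2 : (k:ℝ) + 1 + 1 + σ = (k:ℝ) + 2 + σ := by ring
      rw [e2, auxF]
      linear_combination ih
  have hθ1 : c / (1 + σ) < 1 := (div_lt_one h1σ).2 hcσ
  have hθ0 : 0 < c / (1 + σ) := by positivity
  set Q : ℝ := (1 + σ) / (1 + σ - c) with hQ
  have hσc : (0:ℝ) < 1 + σ - c := by linarith
  have hQ0 : 0 < Q := by rw [hQ]; positivity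
  have hQe : 1 / (1 - c / (1 + σ)) = Q := by
    have hpos : (0:ℝ) < 1 - c / (1 + σ) := by linarith
    rw [hQ, div_eq_div_iff hpos.ne' hσc.ne']
    field_simp
  set K : ℝ := c ^ 2 * Q + c with hK
  have hK0 : 0 < K := by positivity
  -- the key pointwise bound
  have hfb : ∀ j : ℕ, |auxF σ c j| ≤ K * (1 / ((j:ℝ) + 1) - 1 / ((j:ℝ) + 2)) := by
    intro j
    have hj0 : (0:ℝ) ≤ (j:ℝ) := Nat.cast_nonneg j
    set x : ℝ := (j:ℝ) + 1 + σ with hxdef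
    have hx1 : 1 + σ ≤ x := by rw [hxdef]; linarith
    have hx0 : (0:ℝ) < x := by linarith
    have hfacpos : 0 < 1 - c / x := hxfac x hx1
    have hu : c / x ≤ c / (1 + σ) := by
      rw [div_le_div_iff₀ hx0 h1σ]
      nlinarith
    -- Term 1 : log(1-u) + u
    have hT1a : Real.log (1 - c / x) ≤ -(c / x) := by
      have := Real.log_le_sub_one_of_pos hfacpos
      linarith
    have hT1b : -(c/x) - (c/x)^2 * Q ≤ Real.log (1 - c / x) := by
      have h := Real.log_le_sub_one_of_pos (inv_pos.2 hfacpos)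
      rw [Real.log_inv] at h
      have hxc : (0:ℝ) < x - c := by linarith
      have he : (1 - c/x)⁻¹ - 1 = (c/x) / (1 - c/x) := by field_simp; ring
      rw [he] at h
      -- h : -log(1-c/x) ≤ (c/x)/(1-c/x)
      have hd : (c/x) / (1 - c/x) ≤ (c/x) + (c/x)^2 * Q := by
        have h1 : 1 - c/(1+σ) ≤ 1 - c/x := by linarith
        have h2 : 0 < 1 - c/(1+σ) := by linarith
        rw [div_le_iff₀ hfacpos]
        have hcx0 : 0 < c / x := by positivity
        have key : (c/x)^2 * Q * (1 - c/x) ≥ (c/x)^2 * Q * (1 - c/(1+σ)) := by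
          nlinarith [mul_nonneg (sq_nonneg (c/x)) hQ0.le]
        have hQ1 : Q * (1 - c/(1+σ)) = 1 := by
          rw [← hQe]
          field_simp
        nlinarith [hcx0, sq_nonneg (c/x)]
      linarith
    -- Term 2 : log(x+1) - log x - 1/x
    have hxx : Real.log (x + 1) - Real.log x = Real.log (1 + 1/x) := by
      rw [← Real.log_div (by positivity) hx0.ne']
      congr 1
      field_simp
    have ht0 : (0:ℝ) < 1/x := by positivity
    have hT2a : Real.log (1 + 1/x) ≤ 1/x := by
      have := Real.log_le_sub_one_of_pos (show (0:ℝ) < 1 + 1/x by linarith)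
      linarith
    have hT2b : 1/x - (1/x)^2 ≤ Real.log (1 + 1/x) := by
      have h := Real.log_le_sub_one_of_pos (inv_pos.2 (show (0:ℝ) < 1 + 1/x by linarith))
      rw [Real.log_inv] at h
      have he : (1 + 1/x)⁻¹ - 1 = -((1/x) / (1 + 1/x)) := by field_simp; ring
      rw [he] at h
      have hd : 1/x - (1/x)^2 ≤ (1/x) / (1 + 1/x) := by
        rw [le_div_iff₀ (show (0:ℝ) < 1 + 1/x by linarith)]
        nlinarith [ht0]
      linarith
    -- combine
    have hsplit : auxF σ c j = (Real.log (1 - c/x) + c/x)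
        + c * ((Real.log (x+1) - Real.log x) - 1/x) := by
      rw [auxF, hxdef]
      have : (j:ℝ) + 1 + σ + 1 = (j:ℝ) + 2 + σ := by ring
      rw [← this]
      ring
    have habs : |auxF σ c j| ≤ (c/x)^2 * Q + c * (1/x)^2 := by
      rw [hsplit]
      have b1 : |Real.log (1 - c/x) + c/x| ≤ (c/x)^2 * Q := by
        rw [abs_le]; constructor <;> linarith
      have b2 : |(Real.log (x+1) - Real.log x) - 1/x| ≤ (1/x)^2 := by
        rw [hxx, abs_le]; constructor <;> linarith
      calc |(Real.log (1 - c/x) + c/x) + c * ((Real.log (x+1) - Real.log x) - 1/x)|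
          ≤ |Real.log (1 - c/x) + c/x| + |c * ((Real.log (x+1) - Real.log x) - 1/x)| := abs_add_le _ _
        _ = |Real.log (1 - c/x) + c/x| + c * |(Real.log (x+1) - Real.log x) - 1/x| := by
            rw [abs_mul, abs_of_pos hc0]
        _ ≤ (c/x)^2 * Q + c * (1/x)^2 := by
            have := mul_le_mul_of_nonneg_left b2 hc0.le
            linarith
    have hxbig : ((j:ℝ)+1) * ((j:ℝ)+2) ≤ x^2 := by
      have : (j:ℝ) + 2 ≤ x := by rw [hxdef]; linarith
      nlinarith
    have hKx : (c/x)^2 * Q + c * (1/x)^2 = K / x^2 := by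
      rw [hK, hQ]
      field_simp
    have hfin : K / x^2 ≤ K * (1 / ((j:ℝ) + 1) - 1 / ((j:ℝ) + 2)) := by
      have he : 1 / ((j:ℝ) + 1) - 1 / ((j:ℝ) + 2) = 1 / (((j:ℝ)+1) * ((j:ℝ)+2)) := by
        have h1 : (0:ℝ) < (j:ℝ)+1 := by positivity
        have h2 : (0:ℝ) < (j:ℝ)+2 := by positivity
        field_simp
        ring
      rw [he, mul_one_div]
      exact div_le_div_of_nonneg_left hK0.le (by positivity) hxbig
    calc |auxF σ c j| ≤ (c/x)^2 * Q + c * (1/x)^2 := habs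
      _ = K / x^2 := hKx
      _ ≤ K * (1 / ((j:ℝ) + 1) - 1 / ((j:ℝ) + 2)) := hfin
  -- summability
  have hfb2 : ∀ j : ℕ, |auxF σ c j| ≤ K * (1 / ((j:ℝ)+1)^2) := by
    intro j
    refine (hfb j).trans ?_
    have h1 : (0:ℝ) < (j:ℝ)+1 := by positivity
    have h2 : (0:ℝ) < (j:ℝ)+2 := by positivity
    have : 1 / ((j:ℝ) + 1) - 1 / ((j:ℝ) + 2) ≤ 1 / ((j:ℝ)+1)^2 := by
      rw [div_sub_div _ _ h1.ne' h2.ne', div_le_div_iff₀ (by positivity) (by positivity)]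
      nlinarith
    exact mul_le_mul_of_nonneg_left this hK0.le
  have hs2 : Summable (fun n : ℕ => 1 / ((n:ℝ)+1)^2) := by
    have h := summable_one_div_nat_pow.2 (show 1 < 2 by norm_num)
    have h2 := (_root_.summable_nat_add_iff 1).2 h
    exact h2.congr fun n => by push_cast; ring
  have habsf : Summable (fun j => |auxF σ c j|) :=
    Summable.of_nonneg_of_le (fun j => abs_nonneg _) hfb2 (hs2.mul_left K)
  have hsummable : Summable (auxF σ c) := habsf.of_abs
  set S : ℝ := ∑' j, auxF σ c j with hS
  have hsum_tendsto : Tendsto (fun n => ∑ j ∈ Finset.range n, auxF σ c j) atTop (𝓝 S) :=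
    hsummable.hasSum.tendsto_sum_nat
  -- telescoping
  have htel : ∀ n : ℕ, ∑ j ∈ Finset.range n, (1/((j:ℝ)+1) - 1/((j:ℝ)+2)) = 1 - 1/((n:ℝ)+1) := by
    intro n
    induction n with
    | zero => simp
    | succ n ih =>
      rw [Finset.sum_range_succ, ih]
      push_cast
      have h1 : ((n:ℝ)+1) ≠ 0 := by positivity
      have h2 : ((n:ℝ)+2) ≠ 0 := by positivity
      field_simp
      ring
  have htail : ∀ k : ℕ, |∑ j ∈ Finset.range k, auxF σ c j - S| ≤ K * (1/((k:ℝ)+1)) := by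
    intro k
    have ht : Tendsto (fun m => |∑ j ∈ Finset.range k, auxF σ c j - ∑ j ∈ Finset.range m, auxF σ c j|)
        atTop (𝓝 |∑ j ∈ Finset.range k, auxF σ c j - S|) :=
      (tendsto_const_nhds.sub hsum_tendsto).abs
    refine le_of_tendsto ht ?_
    filter_upwards [eventually_ge_atTop k] with m hm
    have hIco : ∑ j ∈ Finset.range k, auxF σ c j - ∑ j ∈ Finset.range m, auxF σ c j
        = -∑ j ∈ Finset.Ico k m, auxF σ c j := by
      rw [Finset.sum_Ico_eq_sub _ hm]; ring
    rw [hIco, abs_neg]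
    have htel2 : ∑ j ∈ Finset.Ico k m, (1/((j:ℝ)+1) - 1/((j:ℝ)+2))
        = 1/((k:ℝ)+1) - 1/((m:ℝ)+1) := by
      rw [Finset.sum_Ico_eq_sub _ hm, htel, htel]; ring
    calc |∑ j ∈ Finset.Ico k m, auxF σ c j| ≤ ∑ j ∈ Finset.Ico k m, |auxF σ c j| :=
          Finset.abs_sum_le_sum_abs _ _
      _ ≤ ∑ j ∈ Finset.Ico k m, K * (1/((j:ℝ)+1) - 1/((j:ℝ)+2)) :=
          Finset.sum_le_sum fun j _ => hfb j
      _ = K * (1/((k:ℝ)+1) - 1/((m:ℝ)+1)) := by rw [← Finset.mul_sum, htel2]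
      _ ≤ K * (1/((k:ℝ)+1)) := by
          have h0 : (0:ℝ) ≤ 1/((m:ℝ)+1) := by positivity
          exact mul_le_mul_of_nonneg_left (by linarith) hK0.le
  rw [hS] at htail
  exact auxBigO σ c K hσ1 hc2 hcσ hK0 hApos hkey hsummable htail
    (fun C h => auxCeq σ c C hσ1 hc2 hcσ hApos h)

theorem prod_one_sub_step_asymptotics
    (s σ l : ℝ) (hs : 0 < s) (hσ : 0 < σ) (hl : 0 < l)
    (hsl : 4 < s * l) (hσ' : 0 < 1 + σ - s * l / 2) :
    ((fun k : ℕ => (∏ i ∈ Finset.Icc 1 k, (1 - (s / ((i : ℝ) + σ)) * l / 2))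
          - (Real.Gamma (1 + σ) / Real.Gamma (1 + σ - s * l / 2))
            * ((k : ℝ) + 1 + σ) ^ (-(s * l / 2)))
        =O[atTop] fun k : ℕ => ((k : ℝ) + 1 + σ) ^ (-1 - s * l / 2)) ∧
      ((fun k : ℕ => ∏ i ∈ Finset.Icc 1 k, (1 - (s / ((i : ℝ) + σ)) * l / 2))
        =O[atTop] fun k : ℕ => (k : ℝ) ^ (-(s * l / 2))) := by
  have hσ1 : 1 < σ := by linarith
  have h := aux_main σ (s * l / 2) hσ1 (by linarith) (by linarith)
  have hfac : ∀ i : ℕ, 1 - (s / ((i : ℝ) + σ)) * l / 2 = 1 - s * l / 2 / ((i : ℝ) + σ) := by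
    intro i
    have h0 : ((i:ℝ) + σ) ≠ 0 := by positivity
    field_simp
  simp only [hfac]
  simpa only [auxA] using h
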